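/- arXiv:2307.09253 — 9 statements merged into one kernel-verified Lean document; each statement's English description precedes it below -/
import Mathlib

section
/- A catoid C is local (i.e. t(x) = s(y) implies x⊙y ≠ ∅) if and only if the direct-image identities s(x⊙y) = s(x⊙s(y)) and t(x⊙y) = t(t(x)⊙y) hold for all x, y ∈ C. -/
/-- A catoid: a set with a multioperation and source/target maps. -/
structure Catoid (C : Type*) where
  mul : C → C → Set C
  src : C → C
  tgt : C → C
  assoc : ∀ x y z : C, (⋃ v ∈ mul y z, mul x v) = ⋃ u ∈ mul x y, mul u z
  weak_local : ∀ x y : C, mul x y ≠ ∅ → tgt x = src y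
  src_unit : ∀ x : C, mul (src x) x = {x}
  tgt_unit : ∀ x : C, mul x (tgt x) = {x}

namespace CatoidAux

variable {C : Type*} (X : Catoid C)

lemma tgt_src (x : C) : X.tgt (X.src x) = X.src x := by
  apply X.weak_local
  rw [X.src_unit]
  simp

lemma src_tgt (x : C) : X.src (X.tgt x) = X.tgt x := by
  have := X.weak_local x (X.tgt x) (by rw [X.tgt_unit]; simp)
  exact this.symm

lemma src_of_mem {x y z : C} (h : z ∈ X.mul x y) : X.src z = X.src x := by
  have ha := X.assoc (X.src x) x y
  rw [X.src_unit] at ha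
  simp only [Set.mem_singleton_iff, Set.iUnion_iUnion_eq_left] at ha
  have hz : z ∈ ⋃ v ∈ X.mul x y, X.mul (X.src x) v := by rw [ha]; exact h
  simp only [Set.mem_iUnion] at hz
  obtain ⟨v, hv, hzv⟩ := hz
  have hne : X.mul (X.src x) v ≠ ∅ := by
    intro he; rw [he] at hzv; exact hzv
  have hsv : X.tgt (X.src x) = X.src v := X.weak_local _ _ hne
  rw [tgt_src] at hsv
  have : z ∈ X.mul (X.src v) v := by rwa [← hsv]
  rw [X.src_unit] at this
  rw [this, ← hsv]

lemma tgt_of_mem {x y z : C} (h : z ∈ X.mul x y) : X.tgt z = X.tgt y := by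
  have ha := X.assoc x y (X.tgt y)
  rw [X.tgt_unit] at ha
  simp only [Set.mem_singleton_iff, Set.iUnion_iUnion_eq_left] at ha
  have hz : z ∈ ⋃ u ∈ X.mul x y, X.mul u (X.tgt y) := by rw [← ha]; exact h
  simp only [Set.mem_iUnion] at hz
  obtain ⟨u, hu, hzu⟩ := hz
  have hne : X.mul u (X.tgt y) ≠ ∅ := by
    intro he; rw [he] at hzu; exact hzu
  have htu : X.tgt u = X.src (X.tgt y) := X.weak_local _ _ hne
  rw [src_tgt] at htu
  have : z ∈ X.mul u (X.tgt u) := by rwa [htu]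
  rw [X.tgt_unit] at this
  rw [this, htu]

lemma src_src (x : C) : X.src (X.src x) = X.src x := by
  have := src_tgt X (X.src x)
  rwa [tgt_src] at this

lemma tgt_tgt (x : C) : X.tgt (X.tgt x) = X.tgt x := by
  have := tgt_src X (X.tgt x)
  rwa [src_tgt] at this

end CatoidAux

open CatoidAux in
/-- A catoid is local iff the direct-image locality identities hold. -/
theorem catoid_local_iff {C : Type*} (X : Catoid C) :
    (∀ x y : C, X.tgt x = X.src y → X.mul x y ≠ ∅) ↔
    (∀ x y : C, X.src '' (X.mul x y) = X.src '' (X.mul x (X.src y)) ∧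
                X.tgt '' (X.mul x y) = X.tgt '' (X.mul (X.tgt x) y)) := by
  constructor
  · intro hloc x y
    by_cases h : X.tgt x = X.src y
    · -- both sides are singletons
      have h1 : X.mul x (X.src y) = {x} := by rw [← h, X.tgt_unit]
      have h2 : X.mul (X.tgt x) y = {y} := by rw [h, X.src_unit]
      have hne : (X.mul x y).Nonempty :=
        Set.nonempty_iff_ne_empty.mpr (hloc x y h)
      constructor
      · rw [h1, Set.image_singleton]
        apply Set.eq_singleton_iff_nonempty_unique_mem.mpr
        refine ⟨hne.image _, ?_⟩
        rintro _ ⟨z, hz, rfl⟩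
        exact src_of_mem X hz
      · rw [h2, Set.image_singleton]
        apply Set.eq_singleton_iff_nonempty_unique_mem.mpr
        refine ⟨hne.image _, ?_⟩
        rintro _ ⟨z, hz, rfl⟩
        exact tgt_of_mem X hz
    · -- all four sets are empty
      have e1 : X.mul x y = ∅ := by
        by_contra he; exact h (X.weak_local _ _ he)
      have e2 : X.mul x (X.src y) = ∅ := by
        by_contra he
        have := X.weak_local _ _ he
        rw [src_src] at this
        exact h this
      have e3 : X.mul (X.tgt x) y = ∅ := by
        by_contra he
        have := X.weak_local _ _ he
        rw [tgt_tgt] at this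
        exact h this
      rw [e1, e2, e3]
      simp
  · intro hid x y h
    have h1 : X.mul x (X.src y) = {x} := by rw [← h, X.tgt_unit]
    have := (hid x y).1
    rw [h1] at this
    intro he
    rw [he] at this
    simp only [Set.image_empty, Set.image_singleton] at this
    exact (Set.singleton_ne_empty _) this.symm
end

section
/- Every catoid C equipped with an operation (−)⁻ : C → C satisfying s(x) ∈ x⊙x⁻ and t(x) ∈ x⁻⊙x for all x is local, i.e. t(x) = s(y) implies x⊙y ≠ ∅. -/
/-- A catoid with a weak inversion is local. -/
theorem catoid_with_inv_local {C : Type*} (X : Catoid C) (inv : C → C)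
    (h1 : ∀ x, X.src x ∈ X.mul x (inv x)) (h2 : ∀ x, X.tgt x ∈ X.mul (inv x) x) :
    ∀ x y : C, X.tgt x = X.src y → X.mul x y ≠ ∅ := by
  intro x y hxy
  -- y belongs to the RHS of assoc (inv x) x y
  have hy : y ∈ ⋃ u ∈ X.mul (inv x) x, X.mul u y := by
    apply Set.mem_biUnion (h2 x)
    rw [hxy, X.src_unit]
    rfl
  rw [← X.assoc (inv x) x y] at hy
  obtain ⟨_, ⟨v, rfl⟩, hv⟩ := hy
  obtain ⟨_, ⟨hvmem, rfl⟩, _⟩ := hv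
  intro hempty
  rw [hempty] at hvmem
  exact hvmem
end

section
/- Every groupoid is a category; that is, every catoid with inversion satisfying x⊙x⁻ = {s(x)} and x⁻⊙x = {t(x)} is both local (t(x) = s(y) implies x⊙y ≠ ∅) and functional (x, x' ∈ y⊙z implies x = x'). -/
/-- A groupoid: a catoid with inversion. -/
structure Groupoid (C : Type*) extends Catoid C where
  inv : C → C
  mul_inv : ∀ x : C, mul x (inv x) = {src x}
  inv_mul : ∀ x : C, mul (inv x) x = {tgt x}

/-- Every groupoid is a category: it is local and functional. -/
theorem groupoid_is_category {C : Type*} (G : Groupoid C) :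
    (∀ x y : C, G.tgt x = G.src y → G.mul x y ≠ ∅) ∧
    (∀ x x' y z : C, x ∈ G.mul y z → x' ∈ G.mul y z → x = x') := by
  constructor
  · intro x y h heq
    have ha := G.assoc (G.inv x) x y
    rw [G.inv_mul, h] at ha
    simp only [Set.biUnion_singleton, G.src_unit] at ha
    have hy : y ∈ ⋃ v ∈ G.mul x y, G.mul (G.inv x) v := by rw [ha]; exact rfl
    obtain ⟨v, hv, _⟩ := Set.mem_iUnion₂.mp hy
    rw [heq] at hv
    exact hv
  · intro x x' y z hx hx'
    have hne : G.mul y z ≠ ∅ := fun h => by rw [h] at hx; exact hx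
    have hts : G.tgt y = G.src z := G.weak_local y z hne
    have ha := G.assoc (G.inv y) y z
    rw [G.inv_mul] at ha
    have hz : z ∈ ⋃ v ∈ G.mul y z, G.mul (G.inv y) v := by
      rw [ha]
      simp only [Set.biUnion_singleton, hts, G.src_unit]
      exact rfl
    obtain ⟨v, hv, hzv⟩ := Set.mem_iUnion₂.mp hz
    have hsv : G.src v = G.src y := by
      have h1 : G.tgt (G.inv y) = G.src v :=
        G.weak_local _ _ (fun h => by rw [h] at hzv; exact hzv)
      have h2 : G.tgt (G.inv y) = G.src y :=
        G.weak_local _ _ (by rw [G.inv_mul]; exact Set.singleton_ne_empty _)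
      rw [← h1, h2]
    have hb := G.assoc y (G.inv y) v
    rw [G.mul_inv] at hb
    have hsub : G.mul y z ⊆ {v} := by
      intro a ha'
      have hm : a ∈ ⋃ w ∈ G.mul (G.inv y) v, G.mul y w :=
        Set.mem_iUnion₂.mpr ⟨z, hzv, ha'⟩
      rw [hb] at hm
      simpa [Set.biUnion_singleton, ← hsv, G.src_unit] using hm
    have e1 := hsub hx
    have e2 := hsub hx'
    simp_all
end

section
/- An involutive quantale satisfies the Dedekind law αβ ⊓ γ ≤ (α ⊓ γβ°)(β ⊓ α°γ) if and only if it satisfies the modular law αβ ⊓ γ ≤ (α ⊓ γβ°)β. -/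
/-- A quantale: a complete lattice with an associative, sup-preserving
multiplication with unit. -/
structure Quantale' (Q : Type*) [CompleteLattice Q] where
  mul : Q → Q → Q
  one : Q
  mul_assoc : ∀ a b c : Q, mul (mul a b) c = mul a (mul b c)
  one_mul : ∀ a : Q, mul one a = a
  mul_one : ∀ a : Q, mul a one = a
  mul_sSup : ∀ (a : Q) (S : Set Q), mul a (sSup S) = ⨆ b ∈ S, mul a b
  sSup_mul : ∀ (a : Q) (S : Set Q), mul (sSup S) a = ⨆ b ∈ S, mul b a

/-- An involutive quantale. -/
structure InvQuantale (Q : Type*) [CompleteLattice Q] extends Quantale' Q where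
  inv : Q → Q
  inv_inv : ∀ a : Q, inv (inv a) = a
  inv_sSup : ∀ S : Set Q, inv (sSup S) = ⨆ a ∈ S, inv a
  inv_mul : ∀ a b : Q, inv (mul a b) = mul (inv b) (inv a)

/-- The Dedekind law holds in an involutive quantale iff the modular law does. -/
theorem dedekind_iff_modular {Q : Type*} [CompleteLattice Q] (X : InvQuantale Q) :
    (∀ a b c : Q, X.mul a b ⊓ c ≤ X.mul (a ⊓ X.mul c (X.inv b)) (b ⊓ X.mul (X.inv a) c)) ↔
    (∀ a b c : Q, X.mul a b ⊓ c ≤ X.mul (a ⊓ X.mul c (X.inv b)) b) := by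
  have hmul_left : ∀ (c : Q) {a b : Q}, a ≤ b → X.mul c a ≤ X.mul c b := by
    intro c a b hab
    have hb : X.mul c b = X.mul c (sSup {a, b}) := by
      rw [sSup_pair, sup_eq_right.mpr hab]
    rw [hb, X.mul_sSup]
    exact le_iSup₂_of_le a (by simp) le_rfl
  have hmul_right : ∀ (c : Q) {a b : Q}, a ≤ b → X.mul a c ≤ X.mul b c := by
    intro c a b hab
    have hb : X.mul b c = X.mul (sSup {a, b}) c := by
      rw [sSup_pair, sup_eq_right.mpr hab]
    rw [hb, X.sSup_mul]
    exact le_iSup₂_of_le a (by simp) le_rfl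
  have hinv_mono : ∀ {a b : Q}, a ≤ b → X.inv a ≤ X.inv b := by
    intro a b hab
    have hb : X.inv b = X.inv (sSup {a, b}) := by
      rw [sSup_pair, sup_eq_right.mpr hab]
    rw [hb, X.inv_sSup]
    exact le_iSup₂_of_le a (by simp) le_rfl
  have hinv_le : ∀ {a b : Q}, X.inv a ≤ b → a ≤ X.inv b := by
    intro a b hab
    have := hinv_mono hab
    rwa [X.inv_inv] at this
  have hinv_inf : ∀ a b : Q, X.inv (a ⊓ b) = X.inv a ⊓ X.inv b := by
    intro a b
    refine le_antisymm (le_inf (hinv_mono inf_le_left) (hinv_mono inf_le_right)) ?_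
    refine hinv_le (le_inf ?_ ?_)
    · have := hinv_mono (inf_le_left (a := X.inv a) (b := X.inv b))
      rwa [X.inv_inv] at this
    · have := hinv_mono (inf_le_right (a := X.inv a) (b := X.inv b))
      rwa [X.inv_inv] at this
  constructor
  · intro h a b c
    exact (h a b c).trans (hmul_left _ inf_le_left)
  · intro h a b c
    have hdual : ∀ a b c : Q, X.mul a b ⊓ c ≤ X.mul a (b ⊓ X.mul (X.inv a) c) := by
      intro a b c
      have h2 := h (X.inv b) (X.inv a) (X.inv c)
      rw [X.inv_inv] at h2
      have key : X.inv (X.mul a b ⊓ c) ≤ X.inv (X.mul a (b ⊓ X.mul (X.inv a) c)) :=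
        calc X.inv (X.mul a b ⊓ c)
          = X.mul (X.inv b) (X.inv a) ⊓ X.inv c := by rw [hinv_inf, X.inv_mul]
        _ ≤ X.mul (X.inv b ⊓ X.mul (X.inv c) a) (X.inv a) := h2
        _ = X.inv (X.mul a (b ⊓ X.mul (X.inv a) c)) := by
            simp only [X.inv_mul, hinv_inf, X.inv_inv]
      have := hinv_mono key
      rwa [X.inv_inv, X.inv_inv] at this
    calc X.mul a b ⊓ c
        ≤ X.mul (a ⊓ X.mul c (X.inv b)) b ⊓ c := le_inf (h a b c) inf_le_right
      _ ≤ X.mul (a ⊓ X.mul c (X.inv b))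
            (b ⊓ X.mul (X.inv (a ⊓ X.mul c (X.inv b))) c) := hdual _ _ _
      _ ≤ X.mul (a ⊓ X.mul c (X.inv b)) (b ⊓ X.mul (X.inv a) c) :=
          hmul_left _ (inf_le_inf_left _ (hmul_right _ (hinv_mono inf_le_left)))
end

section
/- Every Dedekind quantale is a modal quantale, with domain and codomain defined by dom(α) = 1 ⊓ αα° and cod(α) = 1 ⊓ α°α; in particular dom satisfies: α ≤ dom(α)α, dom(α·dom(β)) = dom(αβ), dom(α) ≤ 1, dom(⊥) = ⊥, and dom(α ⊔ β) = dom(α) ⊔ dom(β), and dually for cod, together with dom∘cod = cod and cod∘dom = dom. -/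
/-- A Dedekind quantale: an involutive quantale satisfying the Dedekind law. -/
structure DedekindQuantale (Q : Type*) [CompleteLattice Q] extends InvQuantale Q where
  dedekind : ∀ a b c : Q,
    mul a b ⊓ c ≤ mul (a ⊓ mul c (inv b)) (b ⊓ mul (inv a) c)

/-- Domain in a Dedekind quantale. -/
def DedekindQuantale.dom {Q : Type*} [CompleteLattice Q] (X : DedekindQuantale Q) (a : Q) : Q :=
  X.one ⊓ X.mul a (X.inv a)

/-- Codomain in a Dedekind quantale. -/
def DedekindQuantale.cod {Q : Type*} [CompleteLattice Q] (X : DedekindQuantale Q) (a : Q) : Q :=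
  X.one ⊓ X.mul (X.inv a) a

section Aux
variable {Q : Type*} [CompleteLattice Q] (X : DedekindQuantale Q)

lemma DQ.mul_sup (a b c : Q) : X.mul a (b ⊔ c) = X.mul a b ⊔ X.mul a c := by
  have h := X.mul_sSup a {b, c}
  rwa [sSup_pair, iSup_pair] at h

lemma DQ.sup_mul (a b c : Q) : X.mul (b ⊔ c) a = X.mul b a ⊔ X.mul c a := by
  have h := X.sSup_mul a {b, c}
  rwa [sSup_pair, iSup_pair] at h

lemma DQ.mul_le_mul {a b c d : Q} (h1 : a ≤ b) (h2 : c ≤ d) :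
    X.mul a c ≤ X.mul b d := by
  have h3 : X.mul a c ⊔ X.mul b c = X.mul b c := by
    rw [← DQ.sup_mul, sup_eq_right.mpr h1]
  have h4 : X.mul b c ⊔ X.mul b d = X.mul b d := by
    rw [← DQ.mul_sup, sup_eq_right.mpr h2]
  calc X.mul a c ≤ X.mul b c := le_sup_left.trans h3.le
    _ ≤ X.mul b d := le_sup_left.trans h4.le

lemma DQ.bot_mul (a : Q) : X.mul ⊥ a = ⊥ := by
  have := X.sSup_mul a ∅
  simpa using this

lemma DQ.mul_bot (a : Q) : X.mul a ⊥ = ⊥ := by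
  have := X.mul_sSup a ∅
  simpa using this

lemma DQ.inv_mono {a b : Q} (h : a ≤ b) : X.inv a ≤ X.inv b := by
  have h2 := X.inv_sSup {a, b}
  rw [sSup_pair, iSup_pair, sup_eq_right.mpr h] at h2
  rw [h2]
  exact le_sup_left

lemma DQ.inv_sup (a b : Q) : X.inv (a ⊔ b) = X.inv a ⊔ X.inv b := by
  have h := X.inv_sSup {a, b}
  rwa [sSup_pair, iSup_pair] at h

lemma DQ.inv_bot : X.inv ⊥ = ⊥ := by
  have := X.inv_sSup ∅
  simpa using this

lemma DQ.inv_one : X.inv X.one = X.one := by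
  have h : X.inv (X.inv X.one) = X.inv X.one := by
    conv_lhs => rw [← X.mul_one (X.inv X.one), X.inv_mul, X.inv_inv, X.mul_one]
  rw [X.inv_inv] at h
  exact h.symm

/-- Key lemma: 1 ⊓ x·t ≤ dom x. -/
lemma DQ.one_inf_le_dom (x t : Q) : X.one ⊓ X.mul x t ≤ X.dom x := by
  refine le_inf inf_le_left ?_
  have hd := X.dedekind x t X.one
  rw [X.one_mul, X.mul_one] at hd
  calc X.one ⊓ X.mul x t = X.mul x t ⊓ X.one := inf_comm _ _
    _ ≤ _ := hd
    _ ≤ X.mul x (X.inv x) := DQ.mul_le_mul X inf_le_left inf_le_right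

lemma DQ.dom_mono {a b : Q} (h : a ≤ b) : X.dom a ≤ X.dom b :=
  inf_le_inf_left _ (DQ.mul_le_mul X h (DQ.inv_mono X h))

lemma DQ.le_dom_mul (a : Q) : a ≤ X.mul (X.dom a) a := by
  have hd := X.dedekind X.one a a
  simp only [X.one_mul, DQ.inv_one X, inf_idem] at hd
  exact hd

lemma DQ.inv_subid {p : Q} (hp : p ≤ X.one) : X.inv p = p := by
  have h1 : p ≤ X.inv p := by
    have hd := X.dedekind p X.one X.one
    simp only [X.mul_one, DQ.inv_one X, X.one_mul, inf_eq_left.mpr hp] at hd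
    -- hd : p ≤ X.mul p (X.one ⊓ X.inv p)
    calc p ≤ X.mul p (X.one ⊓ X.inv p) := hd
      _ ≤ X.mul X.one (X.inv p) := DQ.mul_le_mul X hp inf_le_right
      _ = X.inv p := X.one_mul _
  have h2 : X.inv p ≤ p := by
    have := DQ.inv_mono X h1
    rwa [X.inv_inv] at this
  exact le_antisymm h2 h1

lemma DQ.subid_mul_self {p : Q} (hp : p ≤ X.one) : X.mul p p = p := by
  refine le_antisymm ?_ ?_
  · calc X.mul p p ≤ X.mul p X.one := DQ.mul_le_mul X le_rfl hp
      _ = p := X.mul_one p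
  · have hd := X.dedekind p X.one X.one
    simp only [X.mul_one, DQ.inv_one X, X.one_mul, inf_eq_left.mpr hp,
      DQ.inv_subid X hp, inf_eq_right.mpr hp] at hd
    exact hd

lemma DQ.dom_subid {p : Q} (hp : p ≤ X.one) : X.dom p = p := by
  unfold DedekindQuantale.dom
  rw [DQ.inv_subid X hp, DQ.subid_mul_self X hp, inf_eq_right.mpr hp]

lemma DQ.dom_le_one (a : Q) : X.dom a ≤ X.one := inf_le_left

lemma DQ.dom_mul_le_dom (x y : Q) : X.dom (X.mul x y) ≤ X.dom x := by
  unfold DedekindQuantale.dom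
  rw [X.mul_assoc]
  exact DQ.one_inf_le_dom X x _

lemma DQ.cod_eq_dom_inv (a : Q) : X.cod a = X.dom (X.inv a) := by
  unfold DedekindQuantale.cod DedekindQuantale.dom
  rw [X.inv_inv]

lemma DQ.dom_sup (a b : Q) : X.dom (a ⊔ b) = X.dom a ⊔ X.dom b := by
  refine le_antisymm ?_ (sup_le (DQ.dom_mono X le_sup_left) (DQ.dom_mono X le_sup_right))
  have hle : a ⊔ b ≤ X.mul (X.dom a ⊔ X.dom b) (a ⊔ b) := by
    refine sup_le ?_ ?_
    · exact (DQ.le_dom_mul X a).trans (DQ.mul_le_mul X le_sup_left le_sup_left)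
    · exact (DQ.le_dom_mul X b).trans (DQ.mul_le_mul X le_sup_right le_sup_right)
  calc X.dom (a ⊔ b) ≤ X.dom (X.mul (X.dom a ⊔ X.dom b) (a ⊔ b)) := DQ.dom_mono X hle
    _ ≤ X.dom (X.dom a ⊔ X.dom b) := DQ.dom_mul_le_dom X _ _
    _ = X.dom a ⊔ X.dom b := DQ.dom_subid X (sup_le inf_le_left inf_le_left)

lemma DQ.dom_local (a b : Q) : X.dom (X.mul a (X.dom b)) = X.dom (X.mul a b) := by
  refine le_antisymm ?_ ?_
  · have h : X.mul a (X.dom b) ≤ X.mul (X.mul a b) (X.inv b) := by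
      rw [X.mul_assoc]
      exact DQ.mul_le_mul X le_rfl inf_le_right
    exact (DQ.dom_mono X h).trans (DQ.dom_mul_le_dom X _ _)
  · have h : X.mul a b ≤ X.mul (X.mul a (X.dom b)) b := by
      rw [X.mul_assoc]
      exact DQ.mul_le_mul X le_rfl (DQ.le_dom_mul X b)
    exact (DQ.dom_mono X h).trans (DQ.dom_mul_le_dom X _ _)

end Aux

/-- Every Dedekind quantale is a modal quantale with the explicit
domain and codomain operations. -/
theorem dedekind_is_modal {Q : Type*} [CompleteLattice Q] (X : DedekindQuantale Q) :
    (∀ a : Q, a ≤ X.mul (X.dom a) a) ∧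
    (∀ a b : Q, X.dom (X.mul a (X.dom b)) = X.dom (X.mul a b)) ∧
    (∀ a : Q, X.dom a ≤ X.one) ∧
    (X.dom ⊥ = ⊥) ∧
    (∀ a b : Q, X.dom (a ⊔ b) = X.dom a ⊔ X.dom b) ∧
    (∀ a : Q, a ≤ X.mul a (X.cod a)) ∧
    (∀ a b : Q, X.cod (X.mul (X.cod a) b) = X.cod (X.mul a b)) ∧
    (∀ a : Q, X.cod a ≤ X.one) ∧
    (X.cod ⊥ = ⊥) ∧
    (∀ a b : Q, X.cod (a ⊔ b) = X.cod a ⊔ X.cod b) ∧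
    (∀ a : Q, X.dom (X.cod a) = X.cod a) ∧
    (∀ a : Q, X.cod (X.dom a) = X.dom a) := by
  refine ⟨DQ.le_dom_mul X, DQ.dom_local X, DQ.dom_le_one X, ?_, DQ.dom_sup X,
    ?_, ?_, fun a => inf_le_left, ?_, ?_, ?_, ?_⟩
  · unfold DedekindQuantale.dom
    rw [DQ.inv_bot X, DQ.mul_bot X, inf_bot_eq]
  · intro a
    have h := DQ.inv_mono X (DQ.le_dom_mul X (X.inv a))
    rw [X.inv_inv, X.inv_mul, X.inv_inv,
      DQ.inv_subid X (DQ.dom_le_one X (X.inv a)), ← DQ.cod_eq_dom_inv X a] at h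
    exact h
  · intro a b
    have hc : X.cod a ≤ X.one := inf_le_left
    rw [DQ.cod_eq_dom_inv X (X.mul (X.cod a) b), DQ.cod_eq_dom_inv X (X.mul a b),
      X.inv_mul, X.inv_mul, DQ.inv_subid X hc, DQ.cod_eq_dom_inv X a]
    exact DQ.dom_local X _ _
  · unfold DedekindQuantale.cod
    rw [DQ.inv_bot X, DQ.mul_bot X, inf_bot_eq]
  · intro a b
    rw [DQ.cod_eq_dom_inv X (a ⊔ b), DQ.cod_eq_dom_inv X a, DQ.cod_eq_dom_inv X b,
      DQ.inv_sup X, DQ.dom_sup X]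
  · intro a
    exact DQ.dom_subid X inf_le_left
  · intro a
    rw [DQ.cod_eq_dom_inv X (X.dom a), DQ.inv_subid X (DQ.dom_le_one X a)]
    exact DQ.dom_subid X (DQ.dom_le_one X a)
end

section
/- In every ω-category (local functional ω-catoid), for all 0 ≤ i < j, the strong morphism laws hold: s_j(x ⊙_i y) = s_j(x) ⊙_i s_j(y) and t_j(x ⊙_i y) = t_j(x) ⊙_i t_j(y). -/
/-- Extension of a multioperation to sets. -/
def setMul {C : Type*} (m : C → C → Set C) (A B : Set C) : Set C :=
  ⋃ a ∈ A, ⋃ b ∈ B, m a b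

/-- An ω-catoid: a set with a catoid structure in each dimension i < ω,
with globular interaction axioms. -/
structure OmegaCatoid (C : Type*) where
  mul : ℕ → C → C → Set C
  src : ℕ → C → C
  tgt : ℕ → C → C
  assoc : ∀ (i : ℕ) (x y z : C),
    (⋃ v ∈ mul i y z, mul i x v) = ⋃ u ∈ mul i x y, mul i u z
  weak_local : ∀ (i : ℕ) (x y : C), mul i x y ≠ ∅ → tgt i x = src i y
  src_unit : ∀ (i : ℕ) (x : C), mul i (src i x) x = {x}
  tgt_unit : ∀ (i : ℕ) (x : C), mul i x (tgt i x) = {x}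
  src_src_comm : ∀ i j, i ≠ j → ∀ x : C, src i (src j x) = src j (src i x)
  src_tgt_comm : ∀ i j, i ≠ j → ∀ x : C, src i (tgt j x) = tgt j (src i x)
  tgt_tgt_comm : ∀ i j, i ≠ j → ∀ x : C, tgt i (tgt j x) = tgt j (tgt i x)
  src_morph : ∀ i j, i ≠ j → ∀ x y : C, src i '' (mul j x y) ⊆ mul j (src i x) (src i y)
  tgt_morph : ∀ i j, i ≠ j → ∀ x y : C, tgt i '' (mul j x y) ⊆ mul j (tgt i x) (tgt i y)
  interchange : ∀ i j, i < j → ∀ w x y z : C,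
    setMul (mul i) (mul j w x) (mul j y z) ⊆ setMul (mul j) (mul i w y) (mul i x z)
  whisker_ss : ∀ i j, i < j → ∀ x : C, src j (src i x) = src i x
  whisker_st : ∀ i j, i < j → ∀ x : C, src j (tgt i x) = tgt i x
  whisker_ts : ∀ i j, i < j → ∀ x : C, tgt j (src i x) = src i x
  whisker_tt : ∀ i j, i < j → ∀ x : C, tgt j (tgt i x) = tgt i x

/-- An ω-category: a local functional ω-catoid. -/
structure OmegaCategory (C : Type*) extends OmegaCatoid C where
  local' : ∀ (i : ℕ) (x y : C), tgt i x = src i y → mul i x y ≠ ∅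
  functional : ∀ (i : ℕ) (x x' y z : C), x ∈ mul i y z → x' ∈ mul i y z → x = x'

/-- In every ω-category, the strong morphism laws hold for i < j. -/
theorem omegaCategory_strong_morphism {C : Type*} (X : OmegaCategory C) :
    ∀ i j, i < j → ∀ x y : C,
      X.src j '' (X.mul i x y) = X.mul i (X.src j x) (X.src j y) ∧
      X.tgt j '' (X.mul i x y) = X.mul i (X.tgt j x) (X.tgt j y) := by
  intro i j hij x y
  have hne : j ≠ i := Ne.symm (Nat.ne_of_lt hij)
  constructor
  · apply Set.Subset.antisymm (X.src_morph j i hne x y)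
    intro u hu
    have hnonempty : X.mul i (X.src j x) (X.src j y) ≠ ∅ := by
      intro h; rw [h] at hu; exact hu
    have hwl := X.weak_local i (X.src j x) (X.src j y) hnonempty
    rw [← X.src_tgt_comm j i hne x, X.whisker_st i j hij x,
        ← X.src_src_comm j i hne y, X.whisker_ss i j hij y] at hwl
    have hxy := X.local' i x y hwl
    obtain ⟨z, hz⟩ := Set.nonempty_iff_ne_empty.mpr hxy
    have hsz : X.src j z ∈ X.mul i (X.src j x) (X.src j y) :=
      X.src_morph j i hne x y ⟨z, hz, rfl⟩
    have := X.functional i u (X.src j z) _ _ hu hsz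
    exact ⟨z, hz, this.symm⟩
  · apply Set.Subset.antisymm (X.tgt_morph j i hne x y)
    intro u hu
    have hnonempty : X.mul i (X.tgt j x) (X.tgt j y) ≠ ∅ := by
      intro h; rw [h] at hu; exact hu
    have hwl := X.weak_local i (X.tgt j x) (X.tgt j y) hnonempty
    rw [← X.tgt_tgt_comm j i hne x, X.whisker_tt i j hij x,
        X.src_tgt_comm i j (Ne.symm hne) y, X.whisker_ts i j hij y] at hwl
    have hxy := X.local' i x y hwl
    obtain ⟨z, hz⟩ := Set.nonempty_iff_ne_empty.mpr hxy
    have htz : X.tgt j z ∈ X.mul i (X.tgt j x) (X.tgt j y) :=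
      X.tgt_morph j i hne x y ⟨z, hz, rfl⟩
    have := X.functional i u (X.tgt j z) _ _ hu htz
    exact ⟨z, hz, this.symm⟩
end

section
/- In every ω-catoid, the globular laws hold: for all 0 ≤ i < j, s_i∘s_j = s_i, s_i∘t_j = s_i, t_i∘t_j = t_i, and t_i∘s_j = t_i. -/
/-- The globular laws hold in every ω-catoid. -/
theorem omegaCatoid_globular {C : Type*} (X : OmegaCatoid C) :
    ∀ i j, i < j → ∀ x : C,
      X.src i (X.src j x) = X.src i x ∧ X.src i (X.tgt j x) = X.src i x ∧
      X.tgt i (X.tgt j x) = X.tgt i x ∧ X.tgt i (X.src j x) = X.tgt i x := by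
  intro i j hij x
  have ne : i ≠ j := Nat.ne_of_lt hij
  refine ⟨?_, ?_, ?_, ?_⟩
  · rw [X.src_src_comm i j ne, X.whisker_ss i j hij]
  · rw [X.src_tgt_comm i j ne, X.whisker_ts i j hij]
  · rw [X.tgt_tgt_comm i j ne, X.whisker_tt i j hij]
  · rw [← X.src_tgt_comm j i ne.symm, X.whisker_st i j hij]
end

section
/- In every ω-quantale, for all 0 ≤ i < j: dom_i(α) ·_i β^{*_j} ≤ (dom_i(α) ·_i β)^{*_j} and (α ·_j β)^{*_i} ≤ α^{*_i} ·_j β^{*_i}, where α^{*_k} denotes the Kleene star ⋁_{n≥0} α^{n_k} with respect to ·_k. -/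
/-- An ω-quantale: a complete lattice with a modal quantale structure in each
dimension i < ω, with globular interaction axioms. -/
structure OmegaQuantale (Q : Type*) [CompleteLattice Q] where
  mul : ℕ → Q → Q → Q
  one : ℕ → Q
  dom : ℕ → Q → Q
  cod : ℕ → Q → Q
  mul_assoc : ∀ (i : ℕ) (a b c : Q), mul i (mul i a b) c = mul i a (mul i b c)
  one_mul : ∀ (i : ℕ) (a : Q), mul i (one i) a = a
  mul_one : ∀ (i : ℕ) (a : Q), mul i a (one i) = a
  mul_sSup : ∀ (i : ℕ) (a : Q) (S : Set Q), mul i a (sSup S) = ⨆ b ∈ S, mul i a b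
  sSup_mul : ∀ (i : ℕ) (a : Q) (S : Set Q), mul i (sSup S) a = ⨆ b ∈ S, mul i b a
  le_dom : ∀ (i : ℕ) (a : Q), a ≤ mul i (dom i a) a
  dom_local : ∀ (i : ℕ) (a b : Q), dom i (mul i a (dom i b)) = dom i (mul i a b)
  dom_subid : ∀ (i : ℕ) (a : Q), dom i a ≤ one i
  dom_bot : ∀ i : ℕ, dom i ⊥ = ⊥
  dom_sup : ∀ (i : ℕ) (a b : Q), dom i (a ⊔ b) = dom i a ⊔ dom i b
  le_cod : ∀ (i : ℕ) (a : Q), a ≤ mul i a (cod i a)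
  cod_local : ∀ (i : ℕ) (a b : Q), cod i (mul i (cod i a) b) = cod i (mul i a b)
  cod_subid : ∀ (i : ℕ) (a : Q), cod i a ≤ one i
  cod_bot : ∀ i : ℕ, cod i ⊥ = ⊥
  cod_sup : ∀ (i : ℕ) (a b : Q), cod i (a ⊔ b) = cod i a ⊔ cod i b
  dom_cod : ∀ (i : ℕ) (a : Q), dom i (cod i a) = cod i a
  cod_dom : ∀ (i : ℕ) (a : Q), cod i (dom i a) = dom i a
  dom_morph : ∀ i j, i ≠ j → ∀ a b : Q, dom i (mul j a b) ≤ mul j (dom i a) (dom i b)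
  cod_morph : ∀ i j, i ≠ j → ∀ a b : Q, cod i (mul j a b) ≤ mul j (cod i a) (cod i b)
  interchange : ∀ i j, i < j → ∀ a b c d : Q,
    mul i (mul j a b) (mul j c d) ≤ mul j (mul i a c) (mul i b d)
  dom_dom : ∀ i j, i < j → ∀ a : Q, dom j (dom i a) = dom i a

/-- Powers with respect to the i-th composition of an ω-quantale. -/
def OmegaQuantale.pow {Q : Type*} [CompleteLattice Q] (X : OmegaQuantale Q)
    (i : ℕ) (a : Q) : ℕ → Q
  | 0 => X.one i
  | n + 1 => X.mul i a (X.pow i a n)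

/-- The Kleene star with respect to the i-th composition. -/
def OmegaQuantale.star {Q : Type*} [CompleteLattice Q] (X : OmegaQuantale Q)
    (i : ℕ) (a : Q) : Q :=
  ⨆ n : ℕ, X.pow i a n

namespace OmegaQuantale

variable {Q : Type*} [CompleteLattice Q] (X : OmegaQuantale Q)

lemma mul_mono_left (i : ℕ) {a b : Q} (h : a ≤ b) (c : Q) :
    X.mul i a c ≤ X.mul i b c := by
  have := X.sSup_mul i c {a, b}
  rw [sSup_pair, sup_eq_right.2 h] at this
  rw [this]
  exact le_iSup₂ (f := fun x (_ : x ∈ ({a, b} : Set Q)) => X.mul i x c) a (Or.inl rfl)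

lemma mul_mono_right (i : ℕ) (c : Q) {a b : Q} (h : a ≤ b) :
    X.mul i c a ≤ X.mul i c b := by
  have := X.mul_sSup i c {a, b}
  rw [sSup_pair, sup_eq_right.2 h] at this
  rw [this]
  exact le_iSup₂ (f := fun x (_ : x ∈ ({a, b} : Set Q)) => X.mul i c x) a (Or.inl rfl)

lemma mul_iSup (i : ℕ) (c : Q) (f : ℕ → Q) :
    X.mul i c (⨆ n, f n) = ⨆ n, X.mul i c (f n) := by
  have := X.mul_sSup i c (Set.range f)
  rwa [sSup_range, iSup_range] at this

lemma dom_one (i : ℕ) : X.dom i (X.one i) = X.one i := by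
  refine le_antisymm (X.dom_subid i _) ?_
  have := X.le_dom i (X.one i)
  rwa [X.mul_one] at this

end OmegaQuantale

/-- Star laws in an ω-quantale. -/
theorem omegaQuantale_star_props {Q : Type*} [CompleteLattice Q] (X : OmegaQuantale Q) :
    ∀ i j, i < j → ∀ a b : Q,
      X.mul i (X.dom i a) (X.star j b) ≤ X.star j (X.mul i (X.dom i a) b) ∧
      X.star i (X.mul j a b) ≤ X.mul j (X.star i a) (X.star i b) := by
  intro i j hij a b
  constructor
  · -- dom law
    set d := X.dom i a with hd
    have hdd : d ≤ X.mul j d d := by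
      have := X.le_dom j d
      rwa [hd, X.dom_dom i j hij] at this
    have hbase : X.mul i d (X.one j) ≤ X.one j := by
      calc X.mul i d (X.one j) ≤ X.mul i (X.one i) (X.one j) :=
            X.mul_mono_left i (X.dom_subid i a) _
        _ = X.one j := X.one_mul i _
    have hpow : ∀ n, X.mul i d (X.pow j b n) ≤ X.pow j (X.mul i d b) n := by
      intro n
      induction n with
      | zero => simpa [OmegaQuantale.pow] using hbase
      | succ n ih =>
        calc X.mul i d (X.pow j b (n + 1))
            = X.mul i d (X.mul j b (X.pow j b n)) := rfl
          _ ≤ X.mul i (X.mul j d d) (X.mul j b (X.pow j b n)) :=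
              X.mul_mono_left i hdd _
          _ ≤ X.mul j (X.mul i d b) (X.mul i d (X.pow j b n)) :=
              X.interchange i j hij _ _ _ _
          _ ≤ X.mul j (X.mul i d b) (X.pow j (X.mul i d b) n) :=
              X.mul_mono_right j _ ih
          _ = X.pow j (X.mul i d b) (n + 1) := rfl
    calc X.mul i d (X.star j b) = ⨆ n, X.mul i d (X.pow j b n) :=
          X.mul_iSup i d _
      _ ≤ ⨆ n, X.pow j (X.mul i d b) n := iSup_mono hpow
      _ = X.star j (X.mul i d b) := rfl
  · -- oplax law
    have hone : X.one i ≤ X.mul j (X.one i) (X.one i) := by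
      have := X.le_dom j (X.one i)
      rwa [show X.dom j (X.one i) = X.one i by
        rw [← X.dom_one i, X.dom_dom i j hij, X.dom_one i]] at this
    have hpow : ∀ n, X.pow i (X.mul j a b) n ≤ X.mul j (X.pow i a n) (X.pow i b n) := by
      intro n
      induction n with
      | zero => simpa [OmegaQuantale.pow] using hone
      | succ n ih =>
        calc X.pow i (X.mul j a b) (n + 1)
            = X.mul i (X.mul j a b) (X.pow i (X.mul j a b) n) := rfl
          _ ≤ X.mul i (X.mul j a b) (X.mul j (X.pow i a n) (X.pow i b n)) :=
              X.mul_mono_right i _ ih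
          _ ≤ X.mul j (X.mul i a (X.pow i a n)) (X.mul i b (X.pow i b n)) :=
              X.interchange i j hij _ _ _ _
          _ = X.mul j (X.pow i a (n + 1)) (X.pow i b (n + 1)) := rfl
    refine iSup_le fun n => le_trans (hpow n) ?_
    calc X.mul j (X.pow i a n) (X.pow i b n)
        ≤ X.mul j (X.star i a) (X.pow i b n) :=
          X.mul_mono_left j (le_iSup (X.pow i a) n) _
      _ ≤ X.mul j (X.star i a) (X.star i b) :=
          X.mul_mono_right j _ (le_iSup (X.pow i b) n)
end

section
/- In every ω-Kleene algebra, for all 0 ≤ i < j, the law (α ·_j β)^{*_i} ≤ α^{*_i} ·_j β^{*_i} holds. -/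
/-- An ω-Kleene algebra: an ω-semiring (additively idempotent, modelled as a
sup-semilattice with least element ⊥ as 0 and ⊔ as +) with Kleene stars. -/
structure OmegaKA (K : Type*) [SemilatticeSup K] [OrderBot K] where
  mul : ℕ → K → K → K
  one : ℕ → K
  dom : ℕ → K → K
  cod : ℕ → K → K
  star : ℕ → K → K
  mul_assoc : ∀ (i : ℕ) (a b c : K), mul i (mul i a b) c = mul i a (mul i b c)
  one_mul : ∀ (i : ℕ) (a : K), mul i (one i) a = a
  mul_one : ∀ (i : ℕ) (a : K), mul i a (one i) = a
  mul_sup : ∀ (i : ℕ) (a b c : K), mul i a (b ⊔ c) = mul i a b ⊔ mul i a c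
  sup_mul : ∀ (i : ℕ) (a b c : K), mul i (a ⊔ b) c = mul i a c ⊔ mul i b c
  mul_bot : ∀ (i : ℕ) (a : K), mul i a ⊥ = ⊥
  bot_mul : ∀ (i : ℕ) (a : K), mul i ⊥ a = ⊥
  le_dom : ∀ (i : ℕ) (a : K), a ≤ mul i (dom i a) a
  dom_local : ∀ (i : ℕ) (a b : K), dom i (mul i a (dom i b)) = dom i (mul i a b)
  dom_subid : ∀ (i : ℕ) (a : K), dom i a ≤ one i
  dom_bot : ∀ i : ℕ, dom i ⊥ = ⊥
  dom_sup : ∀ (i : ℕ) (a b : K), dom i (a ⊔ b) = dom i a ⊔ dom i b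
  le_cod : ∀ (i : ℕ) (a : K), a ≤ mul i a (cod i a)
  cod_local : ∀ (i : ℕ) (a b : K), cod i (mul i (cod i a) b) = cod i (mul i a b)
  cod_subid : ∀ (i : ℕ) (a : K), cod i a ≤ one i
  cod_bot : ∀ i : ℕ, cod i ⊥ = ⊥
  cod_sup : ∀ (i : ℕ) (a b : K), cod i (a ⊔ b) = cod i a ⊔ cod i b
  dom_cod : ∀ (i : ℕ) (a : K), dom i (cod i a) = cod i a
  cod_dom : ∀ (i : ℕ) (a : K), cod i (dom i a) = dom i a
  dom_morph : ∀ i j, i ≠ j → ∀ a b : K, dom i (mul j a b) ≤ mul j (dom i a) (dom i b)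
  cod_morph : ∀ i j, i ≠ j → ∀ a b : K, cod i (mul j a b) ≤ mul j (cod i a) (cod i b)
  interchange : ∀ i j, i < j → ∀ a b c d : K,
    mul i (mul j a b) (mul j c d) ≤ mul j (mul i a c) (mul i b d)
  dom_dom : ∀ i j, i < j → ∀ a : K, dom j (dom i a) = dom i a
  star_unfoldl : ∀ (i : ℕ) (a : K), one i ⊔ mul i a (star i a) ≤ star i a
  star_unfoldr : ∀ (i : ℕ) (a : K), one i ⊔ mul i (star i a) a ≤ star i a
  star_indl : ∀ (i : ℕ) (a b c : K), c ⊔ mul i a b ≤ b → mul i (star i a) c ≤ b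
  star_indr : ∀ (i : ℕ) (a b c : K), c ⊔ mul i b a ≤ b → mul i c (star i a) ≤ b
  star_dom : ∀ i j, i < j → ∀ a b : K,
    mul i (dom i a) (star j b) ≤ star j (mul i (dom i a) b)
  star_cod : ∀ i j, i < j → ∀ a b : K,
    mul i (star j a) (cod i b) ≤ star j (mul i a (cod i b))

private lemma OmegaKA.mul_mono {K : Type*} [SemilatticeSup K] [OrderBot K] (X : OmegaKA K)
    (k : ℕ) {a b c d : K} (hab : a ≤ b) (hcd : c ≤ d) : X.mul k a c ≤ X.mul k b d := by
  calc X.mul k a c ≤ X.mul k b c := by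
        have : X.mul k (a ⊔ b) c = X.mul k a c ⊔ X.mul k b c := X.sup_mul k a b c
        rw [sup_eq_right.mpr hab] at this
        rw [this]; exact le_sup_left
    _ ≤ X.mul k b d := by
        have : X.mul k b (c ⊔ d) = X.mul k b c ⊔ X.mul k b d := X.mul_sup k b c d
        rw [sup_eq_right.mpr hcd] at this
        rw [this]; exact le_sup_left

/-- In every ω-Kleene algebra, (α ·_j β)^{*_i} ≤ α^{*_i} ·_j β^{*_i} for i < j. -/
theorem omegaKA_star_mul {K : Type*} [SemilatticeSup K] [OrderBot K] (X : OmegaKA K) :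
    ∀ i j, i < j → ∀ a b : K,
      X.star i (X.mul j a b) ≤ X.mul j (X.star i a) (X.star i b) := by
  intro i j hij a b
  -- dom i (one i) = one i
  have hdomone : X.dom i (X.one i) = X.one i := by
    apply le_antisymm (X.dom_subid i _)
    have := X.le_dom i (X.one i)
    rwa [X.mul_one] at this
  -- one i ≤ mul j (one i) (one i)
  have hone : X.one i ≤ X.mul j (X.one i) (X.one i) := by
    have h1 : X.dom j (X.one i) = X.one i := by
      conv_lhs => rw [← hdomone]
      rw [X.dom_dom i j hij, hdomone]
    have := X.le_dom j (X.one i)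
    rwa [h1] at this
  have one_le_star : ∀ x : K, X.one i ≤ X.star i x := fun x =>
    le_trans le_sup_left (X.star_unfoldl i x)
  have mul_le_star : ∀ x : K, X.mul i x (X.star i x) ≤ X.star i x := fun x =>
    le_trans le_sup_right (X.star_unfoldl i x)
  have key : X.mul i (X.star i (X.mul j a b)) (X.one i)
      ≤ X.mul j (X.star i a) (X.star i b) := by
    apply X.star_indl
    apply sup_le
    · exact le_trans hone (X.mul_mono j (one_le_star a) (one_le_star b))
    · calc X.mul i (X.mul j a b) (X.mul j (X.star i a) (X.star i b))
          ≤ X.mul j (X.mul i a (X.star i a)) (X.mul i b (X.star i b)) :=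
            X.interchange i j hij a b _ _
        _ ≤ X.mul j (X.star i a) (X.star i b) :=
            X.mul_mono j (mul_le_star a) (mul_le_star b)
  rwa [X.mul_one] at key
end
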